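/- A pre-imputation x (i.e., x(N) = v(N)) is in the pre-kernel of (N,v) if and only if for every pair i < j in N and some (equivalently any) δ ≥ δ₁(x,v), π(x^{i,j,δ}) = π(x^{j,i,δ}), where π is the indirect function. -/

import Mathlib

/-- Indirect function of a TU game. -/
noncomputable def indirect {n : ℕ} (v : Finset (Fin n) → ℝ) (x : Fin n → ℝ) : ℝ :=
  Finset.univ.sup' ⟨∅, Finset.mem_univ ∅⟩ fun S => v S - ∑ k ∈ S, x k

/-- Maximum surplus of player `i` over player `j` at `x`. -/
noncomputable def surplus {n : ℕ} (v : Finset (Fin n) → ℝ) (x : Fin n → ℝ)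
    (i j : Fin n) : ℝ :=
  sSup {r : ℝ | ∃ S : Finset (Fin n), i ∈ S ∧ j ∉ S ∧ r = v S - ∑ k ∈ S, x k}

/-- `δ₁(x,v)`. -/
noncomputable def delta1 {n : ℕ} (v : Finset (Fin n) → ℝ) (x : Fin n → ℝ) : ℝ :=
  sSup {r : ℝ | ∃ (k : Fin n) (S : Finset (Fin n)), k ∉ S ∧
    r = |v (insert k S) - v S - x k|}

/-- Transfer vector. -/
noncomputable def transfer {n : ℕ} (x : Fin n → ℝ) (i j : Fin n) (δ : ℝ) :
    Fin n → ℝ :=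
  fun k => if k = i then x i - δ else if k = j then x j + δ else x k

/-- Pre-kernel of a TU game. -/
def preKernel {n : ℕ} (v : Finset (Fin n) → ℝ) : Set (Fin n → ℝ) :=
  {x | (∑ k, x k) = v Finset.univ ∧
    ∀ i j : Fin n, i ≠ j → surplus v x i j = surplus v x j i}

namespace PKaux

variable {n : ℕ}

lemma delta1_le {v : Finset (Fin n) → ℝ} {x : Fin n → ℝ} {k : Fin n} {S : Finset (Fin n)}
    (hk : k ∉ S) : |v (insert k S) - v S - x k| ≤ delta1 v x := by
  have hfin : ({r : ℝ | ∃ (k : Fin n) (S : Finset (Fin n)), k ∉ S ∧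
      r = |v (insert k S) - v S - x k|}).Finite := by
    apply (Set.finite_range (fun p : Fin n × Finset (Fin n) =>
      |v (insert p.1 p.2) - v p.2 - x p.1|)).subset
    rintro r ⟨k, S, _, rfl⟩
    exact ⟨(k, S), rfl⟩
  exact le_csSup hfin.bddAbove ⟨k, S, hk, rfl⟩

lemma delta1_nonneg (v : Finset (Fin n) → ℝ) (x : Fin n → ℝ) (i : Fin n) :
    0 ≤ delta1 v x :=
  le_trans (abs_nonneg _) (delta1_le (k := i) (S := ∅) (Finset.notMem_empty i))

lemma surplus_eq_sup' (v : Finset (Fin n) → ℝ) (x : Fin n → ℝ) {i j : Fin n} (hij : i ≠ j) :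
    surplus v x i j = (Finset.univ.filter fun S : Finset (Fin n) => i ∈ S ∧ j ∉ S).sup'
      ⟨{i}, by simp [Finset.mem_filter, hij.symm]⟩ (fun S => v S - ∑ k ∈ S, x k) := by
  refine Eq.trans ?_ (Finset.sup'_eq_csSup_image _ _ _).symm
  unfold surplus
  congr 1
  ext r
  simp only [Set.mem_setOf_eq, Set.mem_image, Finset.coe_filter, Finset.mem_univ, true_and,
    Set.mem_setOf_eq]
  constructor
  · rintro ⟨S, h1, h2, rfl⟩; exact ⟨S, ⟨h1, h2⟩, rfl⟩
  · rintro ⟨S, ⟨h1, h2⟩, rfl⟩; exact ⟨S, h1, h2, rfl⟩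

lemma sum_transfer (x : Fin n → ℝ) {i j : Fin n} (hij : i ≠ j) (δ : ℝ) (S : Finset (Fin n)) :
    ∑ k ∈ S, transfer x i j δ k
      = (∑ k ∈ S, x k) - (if i ∈ S then δ else 0) + (if j ∈ S then δ else 0) := by
  have h : ∀ k, transfer x i j δ k
      = x k + (if k = i then -δ else 0) + (if k = j then δ else 0) := by
    intro k
    unfold transfer
    split_ifs with h1 h2 <;> simp_all <;> ring
  simp only [h, Finset.sum_add_distrib, Finset.sum_ite_eq' S, Finset.sum_ite_eq' S]
  split_ifs <;> ring

lemma indirect_transfer (v : Finset (Fin n) → ℝ) (x : Fin n → ℝ) {i j : Fin n}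
    (hij : i ≠ j) {δ : ℝ} (hδ : delta1 v x ≤ δ) :
    indirect v (transfer x i j δ) = surplus v x i j + δ := by
  set F : Finset (Fin n) → ℝ := fun S => v S - ∑ k ∈ S, x k with hF
  have hd : ∀ (k : Fin n) (S : Finset (Fin n)), k ∉ S →
      |v (insert k S) - v S - x k| ≤ δ := fun k S hk => le_trans (delta1_le hk) hδ
  have hAne : (Finset.univ.filter fun S : Finset (Fin n) => i ∈ S ∧ j ∉ S).Nonempty :=
    ⟨{i}, by simp [Finset.mem_filter, hij.symm]⟩
  have hsur : surplus v x i j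
      = (Finset.univ.filter fun S : Finset (Fin n) => i ∈ S ∧ j ∉ S).sup' hAne F := by
    rw [hF]; exact surplus_eq_sup' v x hij
  have hmem : ∀ S : Finset (Fin n), i ∈ S → j ∉ S → F S ≤ surplus v x i j := by
    intro S h1 h2
    rw [hsur]
    exact Finset.le_sup' F (by simp [Finset.mem_filter, h1, h2])
  apply le_antisymm
  · apply Finset.sup'_le
    intro S _
    rw [sum_transfer x hij δ S]
    by_cases h1 : i ∈ S <;> by_cases h2 : j ∈ S <;> simp only [h1, h2, if_true, if_false]
    · -- i ∈ S, j ∈ S : remove j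
      have hjT : j ∉ S.erase j := Finset.notMem_erase j S
      have hiT : i ∈ S.erase j := Finset.mem_erase.2 ⟨hij, h1⟩
      have hins : insert j (S.erase j) = S := Finset.insert_erase h2
      have hsum : ∑ k ∈ S.erase j, x k + x j = ∑ k ∈ S, x k := Finset.sum_erase_add S x h2
      have habs := hd j (S.erase j) hjT
      rw [hins] at habs
      have hFT := hmem (S.erase j) hiT hjT
      have := abs_le.1 habs
      simp only [hF] at hFT ⊢
      linarith [this.2]
    · -- i ∈ S, j ∉ S
      have hFT := hmem S h1 h2
      simp only [hF] at hFT ⊢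
      linarith
    · -- i ∉ S, j ∈ S : remove j, insert i
      set T1 := S.erase j with hT1
      have hjT1 : j ∉ T1 := Finset.notMem_erase j S
      have hiT1 : i ∉ T1 := fun h => h1 (Finset.mem_of_mem_erase h)
      have hins1 : insert j T1 = S := Finset.insert_erase h2
      have hsum1 : ∑ k ∈ T1, x k + x j = ∑ k ∈ S, x k := Finset.sum_erase_add S x h2
      have habs1 := hd j T1 hjT1
      rw [hins1] at habs1
      have habs2 := hd i T1 hiT1
      have hiT : i ∈ insert i T1 := Finset.mem_insert_self i T1
      have hjT : j ∉ insert i T1 := by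
        simp [Finset.mem_insert, hij.symm, hjT1]
      have hsum2 : ∑ k ∈ insert i T1, x k = x i + ∑ k ∈ T1, x k :=
        Finset.sum_insert hiT1
      have hFT := hmem (insert i T1) hiT hjT
      have h1' := abs_le.1 habs1
      have h2' := abs_le.1 habs2
      have hδ0 : 0 ≤ δ := le_trans (delta1_nonneg v x i) hδ
      simp only [hF] at hFT ⊢
      rw [hsum2] at hFT
      linarith [h1'.2, h2'.2]
    · -- i ∉ S, j ∉ S : insert i
      have habs := hd i S h1
      have hiT : i ∈ insert i S := Finset.mem_insert_self i S
      have hjT : j ∉ insert i S := by simp [Finset.mem_insert, hij.symm, h2]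
      have hsum : ∑ k ∈ insert i S, x k = x i + ∑ k ∈ S, x k := Finset.sum_insert h1
      have hFT := hmem (insert i S) hiT hjT
      have h' := abs_le.1 habs
      simp only [hF] at hFT ⊢
      rw [hsum] at hFT
      linarith [h'.2]
  · obtain ⟨S, hS, hSe⟩ := Finset.exists_mem_eq_sup' hAne F
    rw [hsur, hSe]
    simp only [Finset.mem_filter] at hS
    obtain ⟨-, h1, h2⟩ := hS
    have hterm : v S - ∑ k ∈ S, transfer x i j δ k = F S + δ := by
      rw [sum_transfer x hij δ S]
      simp only [h1, h2, if_true, if_false, hF]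
      ring
    calc F S + δ = v S - ∑ k ∈ S, transfer x i j δ k := hterm.symm
      _ ≤ indirect v (transfer x i j δ) :=
        Finset.le_sup' (f := fun S => v S - ∑ k ∈ S, transfer x i j δ k)
          (Finset.mem_univ S)

end PKaux

/-- The indirect function characterizes the pre-kernel: a pre-imputation `x` lies in
the pre-kernel iff for every pair `i < j` and any `δ ≥ δ₁(x,v)`,
`π(x^{i,j,δ}) = π(x^{j,i,δ})`. -/
theorem preKernel_iff_indirect {n : ℕ} (v : Finset (Fin n) → ℝ) (hv : v ∅ = 0)
    (x : Fin n → ℝ) (hx : (∑ k, x k) = v Finset.univ) :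
    x ∈ preKernel v ↔
      ∀ i j : Fin n, i < j → ∀ δ : ℝ, delta1 v x ≤ δ →
        indirect v (transfer x i j δ) = indirect v (transfer x j i δ) := by
  constructor
  · rintro ⟨-, hk⟩ i j hij δ hδ
    rw [PKaux.indirect_transfer v x hij.ne hδ, PKaux.indirect_transfer v x hij.ne' hδ,
      hk i j hij.ne]
  · intro h
    refine ⟨hx, ?_⟩
    intro i j hij
    rcases hij.lt_or_gt with h1 | h1
    · have := h i j h1 (delta1 v x) le_rfl
      rw [PKaux.indirect_transfer v x h1.ne le_rfl,
        PKaux.indirect_transfer v x h1.ne' le_rfl] at this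
      linarith
    · have := h j i h1 (delta1 v x) le_rfl
      rw [PKaux.indirect_transfer v x h1.ne le_rfl,
        PKaux.indirect_transfer v x h1.ne' le_rfl] at this
      linarith
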